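/- Let q = (q₁,q₂,q₃,q₄) ∈ S³ with q₄ < 0 satisfy q₁²/A² + q₂²/B² + q₃²/B² = q₄², and let N = (2q₁/A², 2q₂/B², 2q₃/B², −2q₄). Then the vector n obtained by applying the 3×4 projection matrix with rows (−1/q₄, 0, 0, q₁/q₄²), (0, −1/q₄, 0, q₂/q₄²), (0, 0, −1/q₄, q₃/q₄²) to N equals (B²+1) times the gradient, with respect to the metric with norm ‖(x,y,z)‖_a² = x²/(1+a²)+y²+z², of f(x,y,z) = x²/A² + y²/B² + z²/B² − 1 evaluated at (x,y,z) = (−q₁/q₄, −q₂/q₄, −q₃/q₄), where 1 + a² = (A²+1)/(B²+1). -/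

import Mathlib

/-- For `q ∈ S³` with `q₄ < 0` on the spherical quadric
`q₁²/A² + q₂²/B² + q₃²/B² = q₄²`, applying the 3×4 projection matrix to the normal
`N = (2q₁/A², 2q₂/B², 2q₃/B², −2q₄)` yields `(B²+1)` times the `‖·‖_a`-gradient of
`f(x,y,z) = x²/A² + y²/B² + z²/B² − 1` at `(x,y,z) = (−q₁/q₄, −q₂/q₄, −q₃/q₄)`,
where `1 + a² = (A²+1)/(B²+1)`. -/
theorem stmt_6 (A B a q₁ q₂ q₃ q₄ : ℝ) (hA : 0 < B) (hAB : B < A)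
    (hsph : q₁^2 + q₂^2 + q₃^2 + q₄^2 = 1) (hq₄ : q₄ < 0)
    (hquad : q₁^2/A^2 + q₂^2/B^2 + q₃^2/B^2 = q₄^2)
    (ha : 1 + a^2 = (A^2 + 1)/(B^2 + 1))
    (x y z : ℝ) (hx : x = -q₁/q₄) (hy : y = -q₂/q₄) (hz : z = -q₃/q₄)
    (N : Fin 4 → ℝ) (hN : N = ![2*q₁/A^2, 2*q₂/B^2, 2*q₃/B^2, -2*q₄])
    (n : Fin 3 → ℝ)
    (hn : n = ![(-1/q₄) * N 0 + (q₁/q₄^2) * N 3,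
                (-1/q₄) * N 1 + (q₂/q₄^2) * N 3,
                (-1/q₄) * N 2 + (q₃/q₄^2) * N 3]) :
    n = (B^2 + 1) • ![(1+a^2) * (2*x/A^2), 2*y/B^2, 2*z/B^2] := by
  have hq4 : q₄ ≠ 0 := ne_of_lt hq₄
  have hAne : A ≠ 0 := by nlinarith
  have hBne : B ≠ 0 := ne_of_gt hA
  have hB1 : B^2 + 1 ≠ 0 := by positivity
  have ha' : (1 + a^2) * (B^2 + 1) = A^2 + 1 := by
    field_simp at ha; linarith
  subst hx hy hz hN hn
  funext i
  fin_cases i <;> simp [Matrix.smul_cons] <;> field_simp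
  · linear_combination q₁ * ha'
  · ring
  · ring
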